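/- Let G, G̃ : S⃗ → ℝ be two return functions on a finite set S⃗ of state sequences, let σ(x) = 1/(1+e^{-x}) be the sigmoid, and β > 0. If for all pairs s⃗, s⃗' ∈ S⃗ we have σ(β(G̃(s⃗) − G̃(s⃗'))) = σ(β(G(s⃗) − G(s⃗'))), then there exists a constant c ∈ ℝ such that G̃ = G + c. -/

import Mathlib

theorem stmt_0 {Sseq : Type*} [Fintype Sseq] [Nonempty Sseq]
    (G Gt : Sseq → ℝ) (β : ℝ) (hβ : 0 < β)
    (h : ∀ s s' : Sseq,
      1 / (1 + Real.exp (-(β * (Gt s - Gt s')))) =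
      1 / (1 + Real.exp (-(β * (G s - G s'))))) :
    ∃ c : ℝ, ∀ s, Gt s = G s + c := by
  obtain ⟨s0⟩ := ‹Nonempty Sseq›
  refine ⟨Gt s0 - G s0, fun s => ?_⟩
  have hs := h s s0
  field_simp at hs
  simp only [add_right_inj, Real.exp_eq_exp, neg_inj, mul_eq_mul_left_iff] at hs
  rcases hs with hs | hs
  · linarith
  · exact absurd hs (ne_of_gt hβ)
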